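/- Let p be a prime. The 𝔽_p-algebra 𝔽_p[A,B,C,D]/(A^p − A, B^p − B, C^p − C, D^p − D, { ((m·A + n·B)^{p−1} − 1)·((m·C + n·D)^{p−1} − 1), ((m·A + n·C)^{p−1} − 1)·((m·B + n·D)^{p−1} − 1) : (m,n) ∈ 𝔽_p², (m,n) ≠ (0,0) }) is a finite-dimensional 𝔽_p-vector space of dimension (p²−1)(p²−p), the order of GL₂(𝔽_p). -/

import Mathlib

open MvPolynomial Matrix
set_option synthInstance.maxHeartbeats 1000000
set_option maxHeartbeats 1000000
set_option linter.unusedSectionVars false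

section Aux
variable (p : ℕ) [Fact p.Prime]

def myGens : Set (MvPolynomial (Fin 4) (ZMod p)) :=
  {z : MvPolynomial (Fin 4) (ZMod p) |
    (∃ i : Fin 4, z = X i ^ p - X i) ∨
    (∃ m n : ZMod p, (m ≠ 0 ∨ n ≠ 0) ∧
      (z = ((C m * X 0 + C n * X 1) ^ (p - 1) - 1) *
           ((C m * X 2 + C n * X 3) ^ (p - 1) - 1) ∨
       z = ((C m * X 0 + C n * X 2) ^ (p - 1) - 1) *
           ((C m * X 1 + C n * X 3) ^ (p - 1) - 1)))}

def myMat (x : Fin 4 → ZMod p) : Matrix (Fin 2) (Fin 2) (ZMod p) :=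
  Matrix.of ![![x 0, x 1], ![x 2, x 3]]

lemma myMat_mulVec (x : Fin 4 → ZMod p) (m n : ZMod p) :
    myMat p x *ᵥ ![m, n] = ![m * x 0 + n * x 1, m * x 2 + n * x 3] := by
  funext i
  fin_cases i <;>
    simp [myMat, Matrix.mulVec, dotProduct, Fin.sum_univ_two, mul_comm]

lemma myMat_vecMul (x : Fin 4 → ZMod p) (m n : ZMod p) :
    ![m, n] ᵥ* myMat p x = ![m * x 0 + n * x 2, m * x 1 + n * x 3] := by
  funext i
  fin_cases i <;>
    simp [myMat, Matrix.vecMul, dotProduct, Fin.sum_univ_two, mul_comm]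

lemma vec_ne_zero_iff (m n : ZMod p) : (![m, n] : Fin 2 → ZMod p) ≠ 0 ↔ (m ≠ 0 ∨ n ≠ 0) := by
  constructor
  · intro h
    by_contra hc
    push_neg at hc
    exact h (by funext i; fin_cases i <;> simp [hc.1, hc.2])
  · rintro (hm | hn) h
    · exact hm (congrFun h 0)
    · exact hn (congrFun h 1)

lemma eval_gen_eq_zero {z : MvPolynomial (Fin 4) (ZMod p)} (hz : z ∈ myGens p)
    {x : Fin 4 → ZMod p} (hx : (myMat p x).det ≠ 0) : eval x z = 0 := by
  rcases hz with ⟨i, rfl⟩ | ⟨m, n, hmn, (rfl | rfl)⟩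
  · simp [ZMod.pow_card]
  · have hv : (![m, n] : Fin 2 → ZMod p) ≠ 0 := (vec_ne_zero_iff p m n).mpr hmn
    have h1 : myMat p x *ᵥ ![m, n] ≠ 0 := by
      intro h0
      exact hx (Matrix.exists_mulVec_eq_zero_iff.mp ⟨_, hv, h0⟩)
    rw [myMat_mulVec] at h1
    simp only [_root_.map_mul, _root_.map_sub, _root_.map_add, _root_.map_pow, _root_.map_one, eval_X, eval_C]
    rcases (vec_ne_zero_iff p _ _).mp h1 with h | h
    · exact mul_eq_zero_of_left (by rw [ZMod.pow_card_sub_one_eq_one h, sub_self]) _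
    · exact mul_eq_zero_of_right _ (by rw [ZMod.pow_card_sub_one_eq_one h, sub_self])
  · have hv : (![m, n] : Fin 2 → ZMod p) ≠ 0 := (vec_ne_zero_iff p m n).mpr hmn
    have h1 : ![m, n] ᵥ* myMat p x ≠ 0 := by
      intro h0
      exact hx (Matrix.exists_vecMul_eq_zero_iff.mp ⟨_, hv, h0⟩)
    rw [myMat_vecMul] at h1
    simp only [_root_.map_mul, _root_.map_sub, _root_.map_add, _root_.map_pow, _root_.map_one, eval_X, eval_C]
    rcases (vec_ne_zero_iff p _ _).mp h1 with h | h
    · exact mul_eq_zero_of_left (by rw [ZMod.pow_card_sub_one_eq_one h, sub_self]) _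
    · exact mul_eq_zero_of_right _ (by rw [ZMod.pow_card_sub_one_eq_one h, sub_self])

lemma exists_gen_eval_one {x : Fin 4 → ZMod p} (hx : (myMat p x).det = 0) :
    ∃ z ∈ myGens p, eval x z = 1 := by
  obtain ⟨v, hv, hv0⟩ := Matrix.exists_mulVec_eq_zero_iff.mpr hx
  have hvm : v = ![v 0, v 1] := by funext i; fin_cases i <;> rfl
  set m := v 0
  set n := v 1
  have hmn : m ≠ 0 ∨ n ≠ 0 := by
    by_contra hc
    push_neg at hc
    exact hv (by rw [hvm, hc.1, hc.2]; funext i; fin_cases i <;> simp)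
  rw [hvm, myMat_mulVec] at hv0
  have h0 : m * x 0 + n * x 1 = 0 := congrFun hv0 0
  have h1 : m * x 2 + n * x 3 = 0 := congrFun hv0 1
  have hp1 : p - 1 ≠ 0 := by
    have := (Fact.out : p.Prime).two_le; omega
  refine ⟨((C m * X 0 + C n * X 1) ^ (p - 1) - 1) *
      ((C m * X 2 + C n * X 3) ^ (p - 1) - 1), Or.inr ⟨m, n, hmn, Or.inl rfl⟩, ?_⟩
  simp only [_root_.map_mul, _root_.map_sub, _root_.map_add, _root_.map_pow, _root_.map_one, eval_X, eval_C]
  rw [h0, h1, zero_pow hp1]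
  ring


noncomputable def I0 : Ideal (MvPolynomial (Fin 4) (ZMod p)) :=
  Ideal.span {z : MvPolynomial (Fin 4) (ZMod p) | ∃ i : Fin 4, z = X i ^ p - X i}

lemma I0_le : I0 p ≤ Ideal.span (myGens p) :=
  Ideal.span_mono fun z hz => Or.inl hz

lemma eval_I0 {h : MvPolynomial (Fin 4) (ZMod p)} (hh : h ∈ I0 p) (x : Fin 4 → ZMod p) :
    eval x h = 0 := by
  have : I0 p ≤ RingHom.ker (eval x) := by
    rw [I0, Ideal.span_le]
    rintro z ⟨i, rfl⟩
    simp [RingHom.mem_ker, ZMod.pow_card]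
  exact this hh

lemma pow_reduce (i : Fin 4) (d : ℕ) :
    ∃ e ≤ p - 1, Ideal.Quotient.mk (I0 p) (X i ^ d) = Ideal.Quotient.mk (I0 p) (X i ^ e) := by
  induction d using Nat.strong_induction_on with
  | _ d ih =>
    by_cases hd : d ≤ p - 1
    · exact ⟨d, hd, rfl⟩
    · have hp2 : 2 ≤ p := (Fact.out : p.Prime).two_le
      obtain ⟨e, he, hee⟩ := ih (d - p + 1) (by omega)
      refine ⟨e, he, ?_⟩
      have hsplit : (X i : MvPolynomial (Fin 4) (ZMod p)) ^ d = X i ^ (d - p) * X i ^ p := by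
        rw [← pow_add]; congr 1; omega
      have hX : Ideal.Quotient.mk (I0 p) (X i ^ p) = Ideal.Quotient.mk (I0 p) (X i) :=
        Ideal.Quotient.eq.mpr (Ideal.subset_span ⟨i, rfl⟩)
      rw [hsplit, _root_.map_mul, hX, ← _root_.map_mul, ← pow_succ, hee]

lemma reduce (f : MvPolynomial (Fin 4) (ZMod p)) :
    ∃ g ∈ restrictDegree (Fin 4) (ZMod p) (p - 1), f - g ∈ I0 p := by
  induction f using MvPolynomial.induction_on' with
  | add f₁ f₂ ih₁ ih₂ =>
    obtain ⟨g₁, hg₁, hfg₁⟩ := ih₁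
    obtain ⟨g₂, hg₂, hfg₂⟩ := ih₂
    refine ⟨g₁ + g₂, Submodule.add_mem _ hg₁ hg₂, ?_⟩
    have : f₁ + f₂ - (g₁ + g₂) = (f₁ - g₁) + (f₂ - g₂) := by ring
    rw [this]
    exact Ideal.add_mem _ hfg₁ hfg₂
  | monomial d c =>
    choose e he hπ using fun i => pow_reduce p i (d i)
    refine ⟨monomial (Finsupp.equivFunOnFinite.symm e) c, ?_, ?_⟩
    · rw [mem_restrictDegree]
      intro s hs i
      have hsub := MvPolynomial.support_monomial_subset hs
      rw [Finset.mem_singleton] at hsub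
      subst hsub
      simpa using he i
    · rw [← Ideal.Quotient.eq]
      rw [monomial_eq, monomial_eq,
        Finsupp.prod_fintype _ _ (fun i => pow_zero _),
        Finsupp.prod_fintype _ _ (fun i => pow_zero _)]
      simp only [_root_.map_mul, map_prod]
      congr 1
      refine Finset.prod_congr rfl fun i _ => ?_
      simpa using hπ i


lemma mem_span_of_vanish (f : MvPolynomial (Fin 4) (ZMod p))
    (hf : ∀ x : Fin 4 → ZMod p, (myMat p x).det ≠ 0 → eval x f = 0) :
    f ∈ Ideal.span (myGens p) := by
  classical
  have hch := fun (x : {x : Fin 4 → ZMod p // (myMat p x).det = 0}) =>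
    exists_gen_eval_one p x.2
  choose g hg hg1 using hch
  set E : MvPolynomial (Fin 4) (ZMod p) :=
    ∑ x : {x : Fin 4 → ZMod p // (myMat p x).det = 0}, indicator x.1 * g x with hE
  have hEmem : E ∈ Ideal.span (myGens p) :=
    Submodule.sum_mem _ fun x _ =>
      Ideal.mul_mem_left _ _ (Ideal.subset_span (hg x))
  have hEeval : ∀ y : Fin 4 → ZMod p,
      eval y E = if (myMat p y).det = 0 then 1 else 0 := by
    intro y
    rw [hE, _root_.map_sum]
    by_cases hy : (myMat p y).det = 0
    · rw [if_pos hy]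
      rw [Fintype.sum_eq_single (⟨y, hy⟩ : {x : Fin 4 → ZMod p // (myMat p x).det = 0})]
      · rw [_root_.map_mul, eval_indicator_apply_eq_one, one_mul]
        exact hg1 ⟨y, hy⟩
      · intro x hx
        rw [_root_.map_mul, eval_indicator_apply_eq_zero, zero_mul]
        exact fun hxy => hx (Subtype.ext hxy.symm)
    · rw [if_neg hy]
      refine Finset.sum_eq_zero fun x _ => ?_
      rw [_root_.map_mul, eval_indicator_apply_eq_zero, zero_mul]
      exact fun hxy => hy (hxy ▸ x.2)
  set h : MvPolynomial (Fin 4) (ZMod p) := f - f * E with hh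
  have hhval : ∀ y : Fin 4 → ZMod p, eval y h = 0 := by
    intro y
    rw [hh, map_sub, _root_.map_mul, hEeval y]
    by_cases hy : (myMat p y).det = 0
    · rw [if_pos hy, mul_one, sub_self]
    · rw [hf y hy, if_neg hy, zero_mul, sub_zero]
  obtain ⟨g0, hg0deg, hg0⟩ := reduce p h
  have hg0val : ∀ y : Fin 4 → ZMod p, eval y g0 = 0 := by
    intro y
    have := eval_I0 p hg0 y
    rw [map_sub] at this
    rw [hhval y] at this
    linear_combination -this
  have hg0z : g0 = 0 := by
    refine MvPolynomial.eq_zero_of_eval_eq_zero (Fin 4) (ZMod p) g0 hg0val ?_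
    rwa [ZMod.card p]
  rw [hg0z, sub_zero] at hg0
  have hhmem : h ∈ Ideal.span (myGens p) := I0_le p hg0
  have : f = h + f * E := by rw [hh]; ring
  rw [this]
  exact Ideal.add_mem _ hhmem (Ideal.mul_mem_left _ _ hEmem)

lemma eval_surj (e : {x : Fin 4 → ZMod p // (myMat p x).det ≠ 0} → ZMod p) :
    ∃ f : MvPolynomial (Fin 4) (ZMod p),
      ∀ s : {x : Fin 4 → ZMod p // (myMat p x).det ≠ 0}, eval s.1 f = e s := by
  classical
  refine ⟨∑ s : {x : Fin 4 → ZMod p // (myMat p x).det ≠ 0}, C (e s) * indicator s.1, ?_⟩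
  intro t
  rw [_root_.map_sum, Fintype.sum_eq_single t]
  · rw [_root_.map_mul, eval_C, eval_indicator_apply_eq_one, mul_one]
  · intro x hx
    rw [_root_.map_mul, eval_indicator_apply_eq_zero, mul_zero]
    exact fun hxy => hx (Subtype.ext hxy.symm)


lemma card_SS :
    Nat.card {x : Fin 4 → ZMod p // (myMat p x).det ≠ 0} = (p ^ 2 - 1) * (p ^ 2 - p) := by
  have e : {x : Fin 4 → ZMod p // (myMat p x).det ≠ 0} ≃ GL (Fin 2) (ZMod p) :=
  { toFun := fun x => Matrix.GeneralLinearGroup.mkOfDetNeZero (myMat p x.1) x.2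
    invFun := fun g => ⟨![(g : Matrix (Fin 2) (Fin 2) (ZMod p)) 0 0,
        (g : Matrix (Fin 2) (Fin 2) (ZMod p)) 0 1,
        (g : Matrix (Fin 2) (Fin 2) (ZMod p)) 1 0,
        (g : Matrix (Fin 2) (Fin 2) (ZMod p)) 1 1], by
      have hm : myMat p ![(g : Matrix (Fin 2) (Fin 2) (ZMod p)) 0 0,
          (g : Matrix (Fin 2) (Fin 2) (ZMod p)) 0 1,
          (g : Matrix (Fin 2) (Fin 2) (ZMod p)) 1 0,
          (g : Matrix (Fin 2) (Fin 2) (ZMod p)) 1 1]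
          = (g : Matrix (Fin 2) (Fin 2) (ZMod p)) := by
        ext i j
        fin_cases i <;> fin_cases j <;> rfl
      rw [hm]
      exact isUnit_iff_ne_zero.mp ((Matrix.isUnit_iff_isUnit_det _).mp g.isUnit)⟩
    left_inv := fun x => Subtype.ext (by funext i; fin_cases i <;> rfl)
    right_inv := fun g => Matrix.GeneralLinearGroup.ext fun i j => by
      fin_cases i <;> fin_cases j <;> rfl }
  rw [Nat.card_congr e, Matrix.card_GL_field, ZMod.card, Fin.prod_univ_two]
  norm_num

end Aux

theorem stmt13 (p : ℕ) [Fact p.Prime] :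
    let Q := MvPolynomial (Fin 4) (ZMod p) ⧸
      Ideal.span {z : MvPolynomial (Fin 4) (ZMod p) |
        (∃ i : Fin 4, z = X i ^ p - X i) ∨
        (∃ m n : ZMod p, (m ≠ 0 ∨ n ≠ 0) ∧
          (z = ((C m * X 0 + C n * X 1) ^ (p - 1) - 1) *
               ((C m * X 2 + C n * X 3) ^ (p - 1) - 1) ∨
           z = ((C m * X 0 + C n * X 2) ^ (p - 1) - 1) *
               ((C m * X 1 + C n * X 3) ^ (p - 1) - 1)))}
    Module.Finite (ZMod p) Q ∧
    Module.finrank (ZMod p) Q = (p ^ 2 - 1) * (p ^ 2 - p) := by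
  intro Q
  classical
  let Φ : MvPolynomial (Fin 4) (ZMod p) →ₐ[ZMod p]
      ({x : Fin 4 → ZMod p // (myMat p x).det ≠ 0} → ZMod p) :=
    Pi.algHom _ _ fun s =>
      { toRingHom := (eval s.1 : MvPolynomial (Fin 4) (ZMod p) →+* ZMod p)
        commutes' := fun r => by simp [MvPolynomial.algebraMap_eq] }
  have hΦ : ∀ (f : MvPolynomial (Fin 4) (ZMod p))
      (s : {x : Fin 4 → ZMod p // (myMat p x).det ≠ 0}), Φ f s = eval s.1 f := fun _ _ => rfl
  have hsurj : Function.Surjective Φ := by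
    intro e
    obtain ⟨f, hf⟩ := eval_surj p e
    refine ⟨f, funext fun s => ?_⟩
    rw [hΦ f s]
    exact hf s
  have hker : RingHom.ker Φ = Ideal.span (myGens p) := by
    ext f
    constructor
    · intro h
      refine mem_span_of_vanish p f fun x hx => ?_
      have := congrFun (RingHom.mem_ker.mp h) ⟨x, hx⟩
      rwa [hΦ f ⟨x, hx⟩] at this
    · intro h
      have hle : Ideal.span (myGens p) ≤ RingHom.ker Φ := by
        rw [Ideal.span_le]
        intro z hz
        refine RingHom.mem_ker.mpr (funext fun s => ?_)
        rw [hΦ z s]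
        exact eval_gen_eq_zero p hz s.2
      exact hle h
  have hQ : Q ≃ₐ[ZMod p] ({x : Fin 4 → ZMod p // (myMat p x).det ≠ 0} → ZMod p) := by
    have e := Ideal.quotientKerAlgEquivOfSurjective hsurj
    exact (Ideal.quotientEquivAlgOfEq (ZMod p) hker.symm).trans e
  constructor
  · exact Module.Finite.equiv hQ.symm.toLinearEquiv
  · rw [hQ.toLinearEquiv.finrank_eq, Module.finrank_fintype_fun_eq_card,
      ← Nat.card_eq_fintype_card, card_SS]
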